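/- Let G be a finitely generated group and X a bounded Banach G-module. Then there exists a bounded linear map E : ℓ∞(G, ℓ∞(G, X*)) → ℓ∞(G, X*) (a weak invariant expectation) such that: (1) E(g ⋆ f) = g * (E f) for every g ∈ G and f ∈ ℓ∞(G, ℓ∞(G, X*)); (2) E(a · f) = a • E(f) for every a ∈ ℓ∞(G) and f ∈ ℓ∞(G, ℓ∞(G, X*)); and (3) there exists a sequence ξ_n ∈ ℓ∞(G, ℓ∞(G)), each finitely supported, nonnegative as a function on G × G, and satisfying ∑_{g∈G} (ξ_n)_g = 1_G (the constant function 1), such that for every f ∈ ℓ∞(G, ℓ∞(G, X*)) the elements ⟨ξ_n, f⟩ converge to E f in the weak-* topology of ℓ∞(G, X*) as the dual of ℓ₁(G, X). -/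

import Mathlib

open scoped ENNReal
set_option linter.unusedSectionVars false

noncomputable section

variable {G : Type*} [Group G]
variable {Z : Type*} [NormedAddCommGroup Z] [NormedSpace ℝ Z]
variable {X : Type*} [NormedAddCommGroup X] [NormedSpace ℝ X]

/-- Build an element of `ℓ∞(G, Z)` from a uniformly bounded function. -/
def linfElem (f : G → Z) (C : ℝ) (h : ∀ g, ‖f g‖ ≤ C) :
    lp (fun _ : G => Z) ∞ :=
  ⟨f, memℓp_infty ⟨C, by rintro r ⟨g, rfl⟩; exact h g⟩⟩

@[simp] lemma linfElem_apply (f : G → Z) (C : ℝ) (h : ∀ g, ‖f g‖ ≤ C) (g : G) :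
    linfElem f C h g = f g := rfl

/-- The action `•` of `ℓ∞(G)` on `ℓ∞(G, Z)`: `(a • f)_g = a_g f_g`. -/
def bullet (a : lp (fun _ : G => ℝ) ∞) (f : lp (fun _ : G => Z) ∞) :
    lp (fun _ : G => Z) ∞ :=
  linfElem (fun g => a g • f g) (‖a‖ * ‖f‖) (by
    intro g
    rw [norm_smul]
    exact mul_le_mul (lp.norm_apply_le_norm ENNReal.top_ne_zero a g)
      (lp.norm_apply_le_norm ENNReal.top_ne_zero f g) (norm_nonneg _) (norm_nonneg _))

lemma bullet_norm_le (a : lp (fun _ : G => ℝ) ∞) (f : lp (fun _ : G => Z) ∞) :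
    ‖bullet a f‖ ≤ ‖a‖ * ‖f‖ :=
  lp.norm_le_of_forall_le (mul_nonneg (norm_nonneg _) (norm_nonneg _)) fun g => by
    rw [bullet]; simp only [linfElem_apply]
    rw [norm_smul]
    exact mul_le_mul (lp.norm_apply_le_norm ENNReal.top_ne_zero a g)
      (lp.norm_apply_le_norm ENNReal.top_ne_zero f g) (norm_nonneg _) (norm_nonneg _)

/-- The action of `G` on `ℓ∞(G, X*)` given by `(g * f)_h = g (f_{g⁻¹h})`, where `G` acts
on `X* ` by the dual action `(gφ)(x) = φ(g⁻¹ x)` of a representation `ρ` of `G` on `X`. -/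
def starA (ρ : G →* X →L[ℝ] X) (g : G) (φ : lp (fun _ : G => X →L[ℝ] ℝ) ∞) :
    lp (fun _ : G => X →L[ℝ] ℝ) ∞ :=
  linfElem (fun h => (φ (g⁻¹ * h)).comp (ρ g⁻¹)) (‖ρ g⁻¹‖ * ‖φ‖) (by
    intro h
    calc ‖(φ (g⁻¹ * h)).comp (ρ g⁻¹)‖ ≤ ‖φ (g⁻¹ * h)‖ * ‖ρ g⁻¹‖ :=
          ContinuousLinearMap.opNorm_comp_le _ _
      _ ≤ ‖ρ g⁻¹‖ * ‖φ‖ := by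
          rw [mul_comm]
          gcongr
          exact lp.norm_apply_le_norm ENNReal.top_ne_zero φ _)

lemma starA_norm_le (ρ : G →* X →L[ℝ] X) (g : G) (φ : lp (fun _ : G => X →L[ℝ] ℝ) ∞) :
    ‖starA ρ g φ‖ ≤ ‖ρ g⁻¹‖ * ‖φ‖ :=
  lp.norm_le_of_forall_le (mul_nonneg (norm_nonneg _) (norm_nonneg _)) fun h => by
    rw [starA]; simp only [linfElem_apply]
    calc ‖(φ (g⁻¹ * h)).comp (ρ g⁻¹)‖ ≤ ‖φ (g⁻¹ * h)‖ * ‖ρ g⁻¹‖ :=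
          ContinuousLinearMap.opNorm_comp_le _ _
      _ ≤ ‖ρ g⁻¹‖ * ‖φ‖ := by
          rw [mul_comm]
          gcongr
          exact lp.norm_apply_le_norm ENNReal.top_ne_zero φ _

/-- The action `⋆` of `G` on `ℓ∞(G, ℓ∞(G, X*))`: `(g ⋆ f)_h = g * (f_{g⁻¹h})`. -/
def starB (ρ : G →* X →L[ℝ] X) (g : G)
    (f : lp (fun _ : G => lp (fun _ : G => X →L[ℝ] ℝ) ∞) ∞) :
    lp (fun _ : G => lp (fun _ : G => X →L[ℝ] ℝ) ∞) ∞ :=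
  linfElem (fun h => starA ρ g (f (g⁻¹ * h))) (‖ρ g⁻¹‖ * ‖f‖) (by
    intro h
    refine (starA_norm_le ρ g _).trans ?_
    gcongr
    exact lp.norm_apply_le_norm ENNReal.top_ne_zero f _)

/-- The action of `ℓ∞(G)` on `ℓ∞(G, ℓ∞(G, X*))`: `(a · f)_g = a • f_g`. -/
def dotB (a : lp (fun _ : G => ℝ) ∞)
    (f : lp (fun _ : G => lp (fun _ : G => Z) ∞) ∞) :
    lp (fun _ : G => lp (fun _ : G => Z) ∞) ∞ :=
  linfElem (fun g => bullet a (f g)) (‖a‖ * ‖f‖) (by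
    intro g
    refine (bullet_norm_le a (f g)).trans ?_
    gcongr
    exact lp.norm_apply_le_norm ENNReal.top_ne_zero f _)

end


set_option maxHeartbeats 1000000

noncomputable def diagE {G : Type*} {X : Type*} [NormedAddCommGroup X] [NormedSpace ℝ X] :
    lp (fun _ : G => lp (fun _ : G => X →L[ℝ] ℝ) ∞) ∞ →L[ℝ] lp (fun _ : G => X →L[ℝ] ℝ) ∞ :=
  LinearMap.mkContinuous
    { toFun := fun f => ⟨fun h => f h h, memℓp_infty ⟨‖f‖, by
        rintro r ⟨h, rfl⟩
        exact le_trans (lp.norm_apply_le_norm ENNReal.top_ne_zero (f h) h)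
          (lp.norm_apply_le_norm ENNReal.top_ne_zero f h)⟩⟩
      map_add' := by
        intro f f'
        apply lp.ext; funext h
        simp [lp.coeFn_add]; rfl
      map_smul' := by
        intro c f
        apply lp.ext; funext h
        simp [lp.coeFn_smul] }
    1 (fun f => by
      rw [one_mul]
      apply lp.norm_le_of_forall_le (norm_nonneg f)
      intro h
      exact le_trans (lp.norm_apply_le_norm ENNReal.top_ne_zero (f h) h)
        (lp.norm_apply_le_norm ENNReal.top_ne_zero f h))

@[simp] lemma diagE_apply {G : Type*} {X : Type*} [NormedAddCommGroup X] [NormedSpace ℝ X]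
    (f : lp (fun _ : G => lp (fun _ : G => X →L[ℝ] ℝ) ∞) ∞) (h : G) :
    diagE f h = f h h := rfl

lemma countable_of_group_fg {G : Type*} [Group G] [h : Group.FG G] : Countable G := by
  obtain ⟨S, hS⟩ := Monoid.fg_def.mp (Group.fg_iff_monoid_fg.mp h)
  have hmem : ∀ x : G, ∃ l : List G, (∀ y ∈ l, y ∈ (S : Set G)) ∧ l.prod = x := fun x =>
    Submonoid.exists_list_of_mem_closure (by rw [hS]; trivial)
  have hsurj : Function.Surjective
      (fun l : List {y : G // y ∈ S} => (l.map Subtype.val).prod) := by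
    intro x
    obtain ⟨l, hl, rfl⟩ := hmem x
    exact ⟨l.attach.map fun y => ⟨y.1, hl _ y.2⟩, by simp [List.map_map, Function.comp]⟩
  exact hsurj.countable

/-- **Existence of weak invariant expectations.**  Let `G` be a finitely generated group and
`X` a bounded Banach `G`-module (a Banach space with a representation `ρ` of `G` by bounded
operators with `sup_g ‖ρ g‖ < ∞`).  Then there is a bounded linear map
`E : ℓ∞(G, ℓ∞(G, X*)) → ℓ∞(G, X*)` such that
(1) `E (g ⋆ f) = g * (E f)`;
(2) `E (a · f) = a • (E f)` for all `a ∈ ℓ∞(G)`; and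
(3) there is a sequence `ξ n ∈ ℓ∞(G, ℓ∞(G))`, each finitely supported, nonnegative on `G × G`
and with `∑_g (ξ n)_g = 1_G`, such that `⟨ξ n, f⟩ → E f` weak-* in `ℓ∞(G, X*) = ℓ₁(G, X)*`
for every `f`, where `⟨ξ, f⟩(h) = ∑_g ξ(g)(h) • f(g)(h)`. -/
theorem weak_invariant_expectation_exists
    {G : Type*} [Group G] [Group.FG G]
    {X : Type*} [NormedAddCommGroup X] [NormedSpace ℝ X] [CompleteSpace X]
    (ρ : G →* X →L[ℝ] X) (C : ℝ) (hρ : ∀ g : G, ‖ρ g‖ ≤ C) :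
    ∃ E : lp (fun _ : G => lp (fun _ : G => X →L[ℝ] ℝ) ∞) ∞ →L[ℝ]
          lp (fun _ : G => X →L[ℝ] ℝ) ∞,
      (∀ (g : G) (f : lp (fun _ : G => lp (fun _ : G => X →L[ℝ] ℝ) ∞) ∞),
          E (starB ρ g f) = starA ρ g (E f)) ∧
      (∀ (a : lp (fun _ : G => ℝ) ∞) (f : lp (fun _ : G => lp (fun _ : G => X →L[ℝ] ℝ) ∞) ∞),
          E (dotB a f) = bullet a (E f)) ∧
      (∃ ξ : ℕ → lp (fun _ : G => lp (fun _ : G => ℝ) ∞) ∞,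
        (∀ n : ℕ, {g : G | ξ n g ≠ 0}.Finite) ∧
        (∀ (n : ℕ) (g h : G), 0 ≤ ξ n g h) ∧
        (∀ (n : ℕ) (h : G), HasSum (fun g : G => ξ n g h) 1) ∧
        (∀ (f : lp (fun _ : G => lp (fun _ : G => X →L[ℝ] ℝ) ∞) ∞)
            (η : lp (fun _ : G => X) 1),
          Filter.Tendsto
            (fun n : ℕ => ∑' h : G, (∑' g : G, ξ n g h • f g h) (η h))
            Filter.atTop
            (nhds (∑' h : G, (E f) h (η h))))) := by
  classical
  have : Countable G := countable_of_group_fg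
  obtain ⟨u, hu⟩ := exists_surjective_nat G
  set σ : ℕ → G → G := fun n h => if ∃ k ≤ n, u k = h then h else 1 with hσ
  refine ⟨diagE, ?_, ?_, ?_⟩
  · intro g f
    apply lp.ext; funext h
    rfl
  · intro a f
    apply lp.ext; funext h
    rfl
  · refine ⟨fun n => linfElem
      (fun g => linfElem (fun h => if g = σ n h then (1 : ℝ) else 0) 1
        (fun h => by split <;> norm_num)) 1
      (fun g => lp.norm_le_of_forall_le zero_le_one fun h => by
        simp only [linfElem_apply]; split <;> norm_num), ?_, ?_, ?_, ?_⟩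
    · intro n
      refine Set.Finite.subset (((Set.finite_Iic n).image u).insert 1) ?_
      intro g hg
      by_contra hmem
      apply hg
      apply lp.ext; funext h
      simp only [linfElem_apply, lp.coeFn_zero, Pi.zero_apply]
      rw [if_neg]
      intro hgh
      apply hmem
      rw [hgh, hσ]
      simp only
      split
      · rename_i hc
        obtain ⟨k, hk, hk2⟩ := hc
        exact Set.mem_insert_of_mem _ ⟨k, hk, hk2⟩
      · exact Set.mem_insert _ _
    · intro n g h
      simp only [linfElem_apply]
      split <;> norm_num
    · intro n h
      simp only [linfElem_apply]
      exact hasSum_ite_eq (σ n h) 1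
    · intro f η
      have key : ∀ (n : ℕ) (h : G),
          (∑' g : G, (linfElem
            (fun g => linfElem (fun h => if g = σ n h then (1 : ℝ) else 0) 1
              (fun h => by split <;> norm_num)) 1
            (fun g => lp.norm_le_of_forall_le zero_le_one fun h => by
              simp only [linfElem_apply]; split <;> norm_num) : lp _ ∞) g h • f g h)
            = f (σ n h) h := by
        intro n h
        rw [tsum_eq_single (σ n h)]
        · simp
        · intro b hb
          simp [if_neg hb]
      simp only [key, diagE_apply]
      have hsum : Summable fun h : G => ‖f‖ * ‖η h‖ := by
        refine Summable.mul_left _ ?_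
        have := (lp.memℓp η).summable (p := 1) (by norm_num)
        simpa using this
      refine tendsto_tsum_of_dominated_convergence hsum ?_ ?_
      · intro h
        obtain ⟨k, hk⟩ := hu h
        apply tendsto_atTop_of_eventually_const (i₀ := k)
        intro n hn
        have : σ n h = h := by rw [hσ]; exact if_pos ⟨k, hn, hk⟩
        rw [this]
      · filter_upwards with n h
        calc ‖(f (σ n h) h) (η h)‖ ≤ ‖f (σ n h) h‖ * ‖η h‖ :=
              ContinuousLinearMap.le_opNorm _ _
          _ ≤ ‖f‖ * ‖η h‖ := by
              gcongr
              exact le_trans (lp.norm_apply_le_norm ENNReal.top_ne_zero (f (σ n h)) h)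
                (lp.norm_apply_le_norm ENNReal.top_ne_zero f (σ n h))
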